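/- arXiv:1610.02645 — 2 statements merged into one kernel-verified Lean document; each statement's English description precedes it below -/
import Mathlib

section
/- Let K = 𝔽₂((t)) be the field of formal Laurent series over 𝔽₂ and ℘(x) = x² − x. The cosets t^{−(2n+1)} + ℘(K) for n = 0, 1, 2, … are pairwise distinct in K/℘(K). In particular the subgroup ℘(K) has infinite index in (K, +). -/
set_option maxHeartbeats 1000000

open HahnSeries Finset

lemma sq_coeff (x : HahnSeries ℤ (ZMod 2)) (a : ℤ) :
    (x * x).coeff a = ∑ ij ∈ (Finset.antidiagonal x.isPWO_support x.isPWO_support a).filter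
      (fun p => p.1 = p.2), x.coeff ij.1 * x.coeff ij.2 := by
  rw [HahnSeries.coeff_mul, ← Finset.sum_filter_add_sum_filter_not _ (fun p => p.1 = p.2)]
  have h0 : ∑ ij ∈ (Finset.antidiagonal x.isPWO_support x.isPWO_support a).filter
      (fun p => ¬ p.1 = p.2), x.coeff ij.1 * x.coeff ij.2 = 0 := by
    have gmem : ∀ p ∈ (Finset.antidiagonal x.isPWO_support x.isPWO_support a).filter
        (fun p => ¬ p.1 = p.2), p.swap ∈ (Finset.antidiagonal x.isPWO_support x.isPWO_support a).filter
        (fun p => ¬ p.1 = p.2) := by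
      intro p hp
      simp only [mem_filter] at hp ⊢
      refine ⟨Finset.swap_mem_addAntidiagonal.mpr hp.1, fun h => hp.2 ?_⟩
      simpa [Prod.ext_iff, eq_comm] using h
    refine Finset.sum_involution (fun p _ => p.swap) (fun p _ => ?_) (fun p hp _ => ?_)
      (fun p hp => gmem p hp) (fun p _ => Prod.swap_swap p)
    · have h2 : ∀ r s : ZMod 2, r * s + s * r = 0 := by decide
      exact h2 _ _
    · simp only [mem_filter] at hp
      intro h
      exact hp.2 (congrArg Prod.fst h.symm ▸ rfl)
  rw [h0, add_zero]

lemma sq_coeff_odd (x : HahnSeries ℤ (ZMod 2)) (b : ℤ) :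
    (x * x).coeff (2 * b + 1) = 0 := by
  rw [sq_coeff]
  apply Finset.sum_eq_zero
  intro p hp
  simp only [mem_filter, mem_addAntidiagonal] at hp
  omega

lemma sq_coeff_even (x : HahnSeries ℤ (ZMod 2)) (b : ℤ) :
    (x * x).coeff (b + b) = x.coeff b := by
  rw [sq_coeff]
  by_cases hb : b ∈ x.support
  · rw [Finset.sum_eq_single (b, b)]
    · have : ∀ r : ZMod 2, r * r = r := by decide
      exact this _
    · intro p hp hne
      simp only [mem_filter, mem_addAntidiagonal] at hp
      exact absurd (Prod.ext (by omega) (by omega)) hne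
    · intro h
      refine absurd ?_ h
      rw [Finset.mem_filter, Finset.mem_addAntidiagonal]
      exact ⟨⟨hb, hb, rfl⟩, rfl⟩
  · rw [HahnSeries.mem_support, not_not] at hb
    rw [hb]
    apply Finset.sum_eq_zero
    intro p hp
    simp only [mem_filter, mem_addAntidiagonal, HahnSeries.mem_support] at hp
    have h1 : p.1 = b := by omega
    rw [h1, hb, zero_mul]

lemma zmod2_solve1 : ∀ r : ZMod 2, (0 : ZMod 2) - r = -1 + 0 → r = 1 := by decide

lemma zmod2_solve2 : ∀ r : ZMod 2, (1 : ZMod 2) - r = -0 + 0 → r = 1 := by decide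

/-- Let `K = 𝔽₂((t))` and `℘(x) = x² − x`. The cosets `t^{-(2n+1)} + ℘(K)`,
`n = 0, 1, 2, …`, are pairwise distinct in `K/℘(K)`; in particular `℘(K)` has
infinite index (index `0` in Mathlib's convention) in `(K, +)`. -/
theorem stmt4 (℘ : LaurentSeries (ZMod 2) →+ LaurentSeries (ZMod 2))
    (h℘ : ∀ x, ℘ x = x ^ 2 - x) :
    (Function.Injective fun n : ℕ =>
      (QuotientAddGroup.mk ((HahnSeries.single (1 : ℤ) (1 : ZMod 2)) ^ (-(2 * (n : ℤ) + 1))) :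
        LaurentSeries (ZMod 2) ⧸ ℘.range)) ∧
    ℘.range.index = 0 := by
  have hsingle : ∀ n : ℕ, (HahnSeries.single (1 : ℤ) (1 : ZMod 2)) ^ (-(2 * (n : ℤ) + 1)) =
      HahnSeries.single (-(2 * (n : ℤ) + 1)) (1 : ZMod 2) :=
    fun n => (RatFunc.single_zpow (-(2 * (n : ℤ) + 1))).symm
  have hinj : Function.Injective fun n : ℕ =>
      (QuotientAddGroup.mk ((HahnSeries.single (1 : ℤ) (1 : ZMod 2)) ^ (-(2 * (n : ℤ) + 1))) :
        LaurentSeries (ZMod 2) ⧸ ℘.range) := by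
    intro n m h
    by_contra hnm
    simp only [hsingle] at h
    rw [QuotientAddGroup.eq] at h
    obtain ⟨x, hx⟩ := h
    rw [h℘] at hx
    set a : ℤ := 2 * (n : ℤ) + 1 with ha
    set b : ℤ := 2 * (m : ℤ) + 1 with hb
    have hab : a ≠ b := fun h' => hnm (by exact_mod_cast (by omega : (n : ℤ) = m))
    have hcoeff : ∀ k : ℤ, (x * x).coeff k - x.coeff k =
        -((HahnSeries.single (-a) (1 : ZMod 2)).coeff k) +
          (HahnSeries.single (-b) (1 : ZMod 2)).coeff k := by
      intro k
      have := congrArg (fun y : LaurentSeries (ZMod 2) => y.coeff k) hx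
      simpa [pow_two] using this
    have main : ∀ j : ℕ, x.coeff (-(2 ^ j * a)) = 1 := by
      intro j
      induction j with
      | zero =>
        have h1 := hcoeff (-a)
        have hodd : -a = 2 * (-(n : ℤ) - 1) + 1 := by rw [ha]; ring
        rw [hodd, sq_coeff_odd, ← hodd] at h1
        rw [HahnSeries.coeff_single_same,
            HahnSeries.coeff_single_of_ne (fun h' : -a = -b => hab (neg_inj.mp h'))] at h1
        have h0 : -(2 ^ 0 * a) = -a := by ring
        rw [h0]
        exact zmod2_solve1 _ h1
      | succ j ih =>
        set c : ℤ := 2 ^ j * a with hc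
        have h1 := hcoeff (-c + -c)
        rw [sq_coeff_even, ih] at h1
        have hne1 : -c + -c ≠ -a := by intro h'; omega
        have hne2 : -c + -c ≠ -b := by intro h'; omega
        rw [HahnSeries.coeff_single_of_ne hne1, HahnSeries.coeff_single_of_ne hne2] at h1
        have h0 : -(2 ^ (j + 1) * a) = -c + -c := by rw [hc]; ring
        rw [h0]
        exact zmod2_solve2 _ h1
    have hwf := x.isWF_support
    rw [Set.isWF_iff_no_descending_seq] at hwf
    have hapos : 0 < a := by rw [ha]; omega
    refine hwf (fun j => -(2 ^ j * a)) ?_ (fun j => ?_)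
    · apply strictAnti_nat_of_succ_lt
      intro j
      have h1 : (0 : ℤ) < 2 ^ j * a := mul_pos (by positivity) hapos
      have h2 : (2 : ℤ) ^ (j + 1) * a = 2 * (2 ^ j * a) := by ring
      omega
    · exact fun h0 => one_ne_zero ((main j).symm.trans h0)
  refine ⟨hinj, ?_⟩
  rw [AddSubgroup.index_eq_zero_iff_infinite]
  exact Infinite.of_injective _ hinj
end

section
/- In the Laurent series field 𝔽_q((t)) over a finite field of characteristic 2, let n ≥ 0, let i ≥ 1 be an integer, θ ∈ 𝔽_q, u ∈ 𝔽_q, and set α = 1 + θ t^i. Then the coefficient of t^{−1} in u t^{−(2n+1)} · α⁻¹ · (dα/dt) equals 0 if i does not divide 2n+1, and equals u · θ^{(2n+1)/i} if i divides 2n+1 and (2n+1)/i is odd (which it always is). -/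
/-- The formal derivative of a Laurent series: `(df/dt).coeff k = (k+1) • f.coeff (k+1)`. -/
noncomputable def lderiv {F : Type*} [Field F] (f : LaurentSeries F) : LaurentSeries F where
  coeff k := (k + 1) • f.coeff (k + 1)
  isPWO_support' := by
    refine ((f.isPWO_support.image_of_monotone (f := fun k : ℤ => k - 1)
      (fun a b hab => by simpa using hab)).mono ?_)
    intro k hk
    have h : f.coeff (k + 1) ≠ 0 := fun h0 => hk (by simp [Function.mem_support, h0])
    exact ⟨k + 1, h, by ring⟩

/-- The formal residue: the coefficient of `t⁻¹`. -/
noncomputable def lres {F : Type*} [Field F] (f : LaurentSeries F) : F := f.coeff (-1)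

/-- Auxiliary: the series `∑_j θ^j t^{i j}`, the inverse of `1 + θ tⁱ` in characteristic 2. -/
noncomputable def geomInv {F : Type*} [Field F] (i : ℕ) (θ : F) : LaurentSeries F where
  coeff k := if 0 ≤ k ∧ (i : ℤ) ∣ k then θ ^ (k.toNat / i) else 0
  isPWO_support' := by
    refine (((Set.isWF_univ_iff.2 (inferInstance : WellFoundedLT ℕ)).isPWO.image_of_monotone
      (f := fun m : ℕ => (m : ℤ)) (fun a b hab => Int.ofNat_le.mpr hab)).mono ?_)
    intro k hk
    have h0 : (0 : ℤ) ≤ k := by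
      by_contra h
      apply hk
      simp only [Function.mem_support, ne_eq, not_not]
      rw [if_neg]
      tauto
    exact ⟨k.toNat, Set.mem_univ _, Int.toNat_of_nonneg h0⟩

theorem geomInv_coeff {F : Type*} [Field F] (i : ℕ) (θ : F) (k : ℤ) :
    (geomInv i θ).coeff k = if 0 ≤ k ∧ (i : ℤ) ∣ k then θ ^ (k.toNat / i) else 0 := rfl

theorem single_mul_coeff' {F : Type*} [Field F] (a : ℤ) (r : F) (x : LaurentSeries F) (b : ℤ) :
    (HahnSeries.single a r * x).coeff b = r * x.coeff (b - a) := by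
  rw [show b = (b - a) + a by ring, HahnSeries.coeff_single_mul_add]; ring_nf

theorem geomInv_mul {F : Type*} [Field F] (hF : CharP F 2) (i : ℕ) (hi : 1 ≤ i) (θ : F) :
    (1 + HahnSeries.single (i : ℤ) θ : LaurentSeries F) * geomInv i θ = 1 := by
  haveI := hF
  have h2 : (2 : F) = 0 := by exact_mod_cast CharP.cast_eq_zero F 2
  have hipos : (0 : ℤ) < i := by exact_mod_cast hi
  ext k
  rw [add_mul, one_mul, HahnSeries.coeff_add, single_mul_coeff', geomInv_coeff, geomInv_coeff,
    HahnSeries.coeff_one]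
  by_cases hk0 : k = 0
  · subst hk0
    rw [if_pos ⟨le_refl 0, dvd_zero _⟩, if_neg (by rintro ⟨h1, -⟩; omega), if_pos rfl]
    simp
  rw [if_neg hk0]
  by_cases hkneg : k < 0
  · rw [if_neg (by rintro ⟨h1, -⟩; omega), if_neg (by rintro ⟨h1, -⟩; omega)]
    ring
  push_neg at hkneg
  by_cases hdvd : (i : ℤ) ∣ k
  · obtain ⟨c, hc⟩ := hdvd
    have hkpos : 0 < k := lt_of_le_of_ne hkneg (Ne.symm hk0)
    have hcpos : 0 < c := by nlinarith
    obtain ⟨m', hm'⟩ : ∃ m', c = ((m' : ℕ) : ℤ) + 1 := ⟨(c - 1).toNat, by omega⟩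
    have hk' : k = ((i * (m' + 1) : ℕ) : ℤ) := by rw [hc, hm']; push_cast; ring
    have hk2 : k - i = ((i * m' : ℕ) : ℤ) := by rw [hc, hm']; push_cast; ring
    rw [if_pos ⟨hkneg, ⟨c, hc⟩⟩, if_pos ⟨by rw [hk2]; exact_mod_cast Int.natCast_nonneg _,
      ⟨(m' : ℤ), by rw [hk2]; push_cast; ring⟩⟩]
    rw [hk2, hk', Int.toNat_natCast, Int.toNat_natCast,
      Nat.mul_div_cancel_left _ (by omega : 0 < i), Nat.mul_div_cancel_left _ (by omega : 0 < i)]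
    rw [pow_succ]
    rw [show θ ^ m' * θ + θ * θ ^ m' = 2 * (θ ^ m' * θ) by ring, h2, zero_mul]
  · rw [if_neg (by tauto), if_neg ?_]
    · ring
    rintro ⟨-, hd⟩
    exact hdvd ((dvd_sub_left (dvd_refl _)).mp hd)

theorem lderiv_one_add_single {F : Type*} [Field F] (i : ℕ) (hi : 1 ≤ i) (θ : F) :
    lderiv (1 + HahnSeries.single (i : ℤ) θ : LaurentSeries F) =
      HahnSeries.single ((i : ℤ) - 1) ((i : F) * θ) := by
  ext k
  show (k + 1) • ((1 + HahnSeries.single (i : ℤ) θ : LaurentSeries F).coeff (k + 1)) = _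
  rw [HahnSeries.coeff_add, HahnSeries.coeff_one, HahnSeries.coeff_single,
    HahnSeries.coeff_single]
  by_cases h : k = (i : ℤ) - 1
  · have h0 : k + 1 ≠ 0 := by omega
    have h1 : k + 1 = (i : ℤ) := by omega
    rw [if_pos h, if_neg h0, if_pos h1, zero_add, zsmul_eq_mul, h1]
    norm_cast
  · have hne : k + 1 ≠ (i : ℤ) := fun hh => h (by omega)
    rw [if_neg h, if_neg hne]
    by_cases h0 : k + 1 = 0
    · rw [if_pos h0, h0]; simp
    · rw [if_neg h0]; simp

/-- In `𝔽_q((t))` of characteristic 2, let `n ≥ 0`, `i ≥ 1`, `θ, u ∈ 𝔽_q` and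
`α = 1 + θ tⁱ`. The coefficient of `t⁻¹` in `u t^{−(2n+1)} · α⁻¹ · dα/dt` is 0
if `i ∤ 2n+1`; and if `i ∣ 2n+1` then `(2n+1)/i` is odd and the coefficient
equals `u · θ^{(2n+1)/i}`. -/
theorem stmt17 {F : Type*} [Field F] [Fintype F] (hF : CharP F 2)
    (n : ℕ) (i : ℕ) (hi : 1 ≤ i) (θ u : F) :
    (¬ (i ∣ 2 * n + 1) →
      lres ((HahnSeries.single (-(2 * (n : ℤ) + 1)) u : LaurentSeries F) *
        (1 + HahnSeries.single (i : ℤ) θ : LaurentSeries F)⁻¹ *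
        lderiv (1 + HahnSeries.single (i : ℤ) θ : LaurentSeries F)) = 0) ∧
    ((i ∣ 2 * n + 1) →
      Odd ((2 * n + 1) / i) ∧
      lres ((HahnSeries.single (-(2 * (n : ℤ) + 1)) u : LaurentSeries F) *
        (1 + HahnSeries.single (i : ℤ) θ : LaurentSeries F)⁻¹ *
        lderiv (1 + HahnSeries.single (i : ℤ) θ : LaurentSeries F)) =
        u * θ ^ ((2 * n + 1) / i)) := by
  haveI := hF
  have h2 : (2 : F) = 0 := by exact_mod_cast CharP.cast_eq_zero F 2
  have hinv : (1 + HahnSeries.single (i : ℤ) θ : LaurentSeries F)⁻¹ = geomInv i θ :=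
    inv_eq_of_mul_eq_one_right (geomInv_mul hF i hi θ)
  rw [hinv, lderiv_one_add_single i hi θ]
  rcases Nat.even_or_odd i with hev | hodd
  · -- i even : derivative vanishes; and i cannot divide 2n+1
    have hiF : (i : F) = 0 := (CharP.cast_eq_zero_iff F 2 i).2 hev.two_dvd
    rw [hiF, zero_mul, HahnSeries.single_eq_zero, mul_zero]
    exact ⟨fun _ => rfl, fun hdvd => absurd (hev.two_dvd.trans hdvd) (by omega)⟩
  · -- i odd
    obtain ⟨m, hm⟩ := hodd
    have hiF : (i : F) = 1 := by rw [hm]; push_cast; rw [h2]; ring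
    rw [hiF, one_mul, mul_right_comm, HahnSeries.single_mul_single]
    have hlres : ∀ f : LaurentSeries F, lres f = f.coeff (-1) := fun _ => rfl
    rw [hlres, single_mul_coeff', geomInv_coeff,
      show (-1 - (-(2 * (n : ℤ) + 1) + ((i : ℤ) - 1))) = (2 * (n : ℤ) + 1) - i by ring]
    constructor
    · intro hnd
      rw [if_neg, mul_zero]
      rintro ⟨-, hd⟩
      have : (i : ℤ) ∣ 2 * (n : ℤ) + 1 := (dvd_sub_left (dvd_refl _)).mp hd
      have : (i : ℤ) ∣ ((2 * n + 1 : ℕ) : ℤ) := by push_cast; exact this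
      exact hnd (Int.natCast_dvd_natCast.mp this)
    · intro hdvd
      have hq : i * ((2 * n + 1) / i) = 2 * n + 1 := Nat.mul_div_cancel' hdvd
      have hodd1 : Odd (i * ((2 * n + 1) / i)) := by rw [hq]; exact ⟨n, by ring⟩
      refine ⟨(Nat.odd_mul.mp hodd1).2, ?_⟩
      obtain ⟨q', hq'⟩ : ∃ q', (2 * n + 1) / i = q' + 1 := by
        rcases Nat.eq_zero_or_pos ((2 * n + 1) / i) with h | h
        · rw [h, mul_zero] at hq; omega
        · exact ⟨(2 * n + 1) / i - 1, by omega⟩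
      rw [hq'] at hq ⊢
      have hcast : (2 * (n : ℤ) + 1) - i = ((i * q' : ℕ) : ℤ) := by
        have := congrArg (fun x : ℕ => (x : ℤ)) hq
        push_cast at this ⊢
        linarith [this]
      rw [hcast, if_pos ⟨Int.natCast_nonneg _, ⟨(q' : ℤ), by push_cast; ring⟩⟩,
        Int.toNat_natCast, Nat.mul_div_cancel_left _ (by omega : 0 < i), pow_succ]
      ring
end
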